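/- Let X be a random variable with survival function P(X > t) = dexp(-μt; -μτ) for t ≥ 0, where 0 < μτ < 1/e. Then the moment generating function of X is M_X(s) = 1/(1 - μ^{-1} s e^{-sτ}) for s in a neighbourhood of 0 where the expression is defined. -/

import Mathlib

open Real Set MeasureTheory

set_option maxHeartbeats 1000000

noncomputable def dexp (μ τ t : ℝ) : ℝ :=
  ∑' n : ℕ, (-μ) ^ n * (t - n * τ) ^ n / (Nat.factorial n) * (if (n : ℝ) * τ ≤ t then 1 else 0)

namespace DexpAux

open Filter Topology

noncomputable def dxT (μ τ : ℝ) (n : ℕ) (t : ℝ) : ℝ :=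
  (-μ) ^ n * (t - n * τ) ^ n / (Nat.factorial n) * (if (n : ℝ) * τ ≤ t then 1 else 0)

lemma dexp_eq_tsum (μ τ t : ℝ) : dexp μ τ t = ∑' n, dxT μ τ n t := rfl

lemma dxT_eq_zero {μ τ : ℝ} {n : ℕ} {t : ℝ} (h : t < n * τ) : dxT μ τ n t = 0 := by
  unfold dxT
  rw [if_neg (not_le.2 h), mul_zero]

lemma dexp_eq_sum {μ τ : ℝ} (hτ : 0 ≤ τ) {N : ℕ} {t : ℝ} (h : t < N * τ) :
    dexp μ τ t = ∑ n ∈ Finset.range N, dxT μ τ n t := by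
  rw [dexp_eq_tsum]
  apply tsum_eq_sum
  intro n hn
  have hNn : (N : ℝ) ≤ (n : ℝ) := by
    exact_mod_cast le_of_not_gt (fun hlt => hn (Finset.mem_range.2 hlt))
  exact dxT_eq_zero (lt_of_lt_of_le h (mul_le_mul_of_nonneg_right hNn hτ))

noncomputable def Qs (μ τ : ℝ) (N : ℕ) (t : ℝ) : ℝ :=
  ∑ n ∈ Finset.range N, (-μ) ^ n * max (t - n * τ) 0 ^ n / (Nat.factorial n)


lemma dexp_eq_Qs {μ τ : ℝ} (hτ : 0 < τ) {N : ℕ} {t : ℝ} (h0 : 0 ≤ t) (h : t < N * τ) :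
    dexp μ τ t = Qs μ τ N t := by
  rw [dexp_eq_sum hτ.le h]
  apply Finset.sum_congr rfl
  intro n _
  unfold dxT
  by_cases hc : (n : ℝ) * τ ≤ t
  · rw [if_pos hc, mul_one, max_eq_left (by linarith : (0:ℝ) ≤ t - n * τ)]
  · rw [if_neg hc, mul_zero]
    have hn : n ≠ 0 := by
      rintro rfl
      exact hc (by simpa using h0)
    have : max (t - n * τ) 0 = 0 := max_eq_right (by push_neg at hc; linarith)
    rw [this, zero_pow hn, mul_zero, zero_div]

lemma Qs_continuous (μ τ : ℝ) (N : ℕ) : Continuous (Qs μ τ N) := by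
  apply continuous_finset_sum
  intro n _
  exact (continuous_const.mul (((continuous_id.sub continuous_const).max continuous_const).pow n)).div_const _

lemma dexp_of_neg {μ τ : ℝ} (hτ : 0 ≤ τ) {t : ℝ} (h : t < 0) : dexp μ τ t = 0 := by
  rw [dexp_eq_tsum]
  have : ∀ n : ℕ, dxT μ τ n t = 0 := by
    intro n
    exact dxT_eq_zero (lt_of_lt_of_le h (by positivity))
  rw [tsum_congr this, tsum_zero]

lemma dexp_one {μ τ : ℝ} (hτ : 0 < τ) {t : ℝ} (h0 : 0 ≤ t) (h1 : t ≤ τ) : dexp μ τ t = 1 := by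
  rw [dexp_eq_Qs hτ h0 (by push_cast; linarith : t < (2:ℕ) * τ)]
  unfold Qs
  rw [Finset.sum_range_succ, Finset.sum_range_succ, Finset.sum_range_zero]
  have h2 : max (t - (1:ℕ) * τ) 0 = 0 := max_eq_right (by push_cast; linarith)
  rw [h2]
  norm_num

lemma dexp_continuousOn {μ τ : ℝ} (hτ : 0 < τ) : ContinuousOn (dexp μ τ) (Ici 0) := by
  intro t ht
  obtain ⟨N, hN⟩ := exists_nat_gt (t / τ)
  have htN : t < N * τ := by
    rw [div_lt_iff₀ hτ] at hN; linarith
  have hmem : Ici (0:ℝ) ∩ Iio ((N:ℝ) * τ) ∈ nhdsWithin t (Ici 0) := by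
    apply Filter.inter_mem self_mem_nhdsWithin
    exact mem_nhdsWithin_of_mem_nhds (Iio_mem_nhds htN)
  apply ContinuousWithinAt.congr_of_eventuallyEq
    ((Qs_continuous μ τ N).continuousAt.continuousWithinAt)
  · filter_upwards [hmem] with u hu
    exact dexp_eq_Qs hτ hu.1 hu.2
  · exact dexp_eq_Qs hτ ht htN


lemma hasDerivAt_maxpow {n : ℕ} (hn : 2 ≤ n) (x : ℝ) :
    HasDerivAt (fun y : ℝ => max y 0 ^ n) (n * max x 0 ^ (n - 1)) x := by
  rcases lt_trichotomy x 0 with hx | hx | hx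
  · have hz : max x 0 ^ (n - 1) = 0 := by
      rw [max_eq_right hx.le, zero_pow (by omega)]
    rw [hz, mul_zero]
    apply HasDerivAt.congr_of_eventuallyEq (hasDerivAt_const x 0)
    filter_upwards [Iio_mem_nhds hx] with y (hy : y < 0)
    rw [max_eq_right hy.le, zero_pow (by omega)]
  · subst hx
    have hz : (n : ℝ) * max (0:ℝ) 0 ^ (n - 1) = 0 := by
      rw [max_self, zero_pow (by omega), mul_zero]
    rw [hz]
    rw [hasDerivAt_iff_tendsto_slope]
    apply squeeze_zero_norm' (a := fun y : ℝ => |y| ^ (n - 1))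
    · filter_upwards [self_mem_nhdsWithin] with y (hy : y ≠ 0)
      have h1 : |max y 0| ≤ |y| := by
        rcases le_total y 0 with h | h
        · rw [max_eq_right h]; simp
        · rw [max_eq_left h]
      have h2 : ‖slope (fun y : ℝ => max y 0 ^ n) 0 y‖ = |max y 0| ^ n / |y| := by
        rw [slope_def_field]
        simp [div_eq_mul_inv, abs_mul, abs_pow, zero_pow (show n ≠ 0 by omega)]
      rw [h2]
      rw [div_le_iff₀ (abs_pos.2 hy)]
      calc |max y 0| ^ n ≤ |y| ^ n := by
            exact pow_le_pow_left₀ (abs_nonneg _) h1 n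
        _ = |y| ^ (n - 1) * |y| := by
            rw [← pow_succ]
            congr 1
            omega
    · have : Tendsto (fun y : ℝ => |y| ^ (n - 1)) (nhds 0) (nhds 0) := by
        have := ((continuous_abs.pow (n-1)).tendsto (0:ℝ))
        rw [Pi.pow_apply, abs_zero, zero_pow (show n - 1 ≠ 0 by omega)] at this
        exact this
      exact this.mono_left nhdsWithin_le_nhds
  · have hrw : max x 0 = x := max_eq_left hx.le
    have key : HasDerivAt (fun y : ℝ => y ^ n) ((n : ℝ) * x ^ (n - 1)) x := by
      simpa using hasDerivAt_pow n x
    rw [hrw]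
    apply key.congr_of_eventuallyEq
    filter_upwards [Ioi_mem_nhds hx] with y (hy : 0 < y)
    rw [max_eq_left hy.le]

lemma hasDerivAt_max1 {x : ℝ} (h : x ≠ 0) :
    HasDerivAt (fun y : ℝ => max y 0) (if 0 ≤ x then 1 else 0) x := by
  rcases h.lt_or_gt with hx | hx
  · rw [if_neg (not_le.2 hx)]
    apply HasDerivAt.congr_of_eventuallyEq (hasDerivAt_const x 0)
    filter_upwards [Iio_mem_nhds hx] with y (hy : y < 0)
    rw [max_eq_right hy.le]
  · rw [if_pos hx.le]
    apply HasDerivAt.congr_of_eventuallyEq (hasDerivAt_id x)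
    filter_upwards [Ioi_mem_nhds hx] with y (hy : 0 < y)
    rw [max_eq_left hy.le]
    rfl


lemma Qs_hasDerivAt {μ τ : ℝ} (hτ : 0 < τ) (M : ℕ) {t : ℝ} (ht : t ≠ τ) :
    HasDerivAt (Qs μ τ (M + 1)) (-μ * ∑ m ∈ Finset.range M, dxT μ τ m (t - τ)) t := by
  have hterm : ∀ n : ℕ, HasDerivAt
      (fun y : ℝ => (-μ) ^ n * max (y - n * τ) 0 ^ n / (Nat.factorial n))
      (if n = 0 then 0 else -μ * dxT μ τ (n - 1) (t - τ)) t := by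
    intro n
    match n with
    | 0 =>
      have : (fun y : ℝ => (-μ) ^ 0 * max (y - (0:ℕ) * τ) 0 ^ 0 / (Nat.factorial 0))
          = fun _ : ℝ => (1:ℝ) := by
        funext y; norm_num
      rw [this, if_pos rfl]
      exact hasDerivAt_const t 1
    | 1 =>
      have hb := hasDerivAt_max1 (x := t - τ) (sub_ne_zero.2 ht)
      have hc : HasDerivAt (fun y : ℝ => y - τ) 1 t := (hasDerivAt_id t).sub_const τ
      have h2 : HasDerivAt (fun y : ℝ => max (y - τ) 0)
          ((if 0 ≤ t - τ then 1 else 0) * 1) t := by have := hb.comp t hc; exact this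
      have h3 := (h2.const_mul ((-μ) ^ 1)).div_const (Nat.factorial 1)
      have hfn : (fun y : ℝ => (-μ) ^ 1 * max (y - (1:ℕ) * τ) 0 ^ 1 / (Nat.factorial 1))
          = fun y : ℝ => (-μ) ^ 1 * max (y - τ) 0 / (Nat.factorial 1) := by
        funext y; norm_num
      rw [hfn, if_neg one_ne_zero]
      refine h3.congr_deriv (Eq.symm ?_)
      unfold dxT
      by_cases hc2 : (0:ℝ) ≤ t - τ
      · rw [if_pos hc2, if_pos (show ((0:ℕ):ℝ) * τ ≤ t - τ by simpa using hc2)]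
        norm_num
      · rw [if_neg hc2, if_neg (show ¬ ((0:ℕ):ℝ) * τ ≤ t - τ by simpa using hc2)]
        norm_num
    | (m+2) =>
      set c : ℝ := ((m+2 : ℕ) : ℝ) * τ with hc_def
      have hb := hasDerivAt_maxpow (n := m+2) (by omega) (t - c)
      have hcc : HasDerivAt (fun y : ℝ => y - c) 1 t := (hasDerivAt_id t).sub_const c
      have h2 : HasDerivAt (fun y : ℝ => max (y - c) 0 ^ (m+2))
          ((((m+2 : ℕ) : ℝ) * max (t - c) 0 ^ (m + 2 - 1)) * 1) t := by have := hb.comp t hcc; exact this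
      have h3 := (h2.const_mul ((-μ) ^ (m+2))).div_const (Nat.factorial (m+2))
      refine h3.congr_deriv (Eq.symm ?_)
      rw [if_neg (Nat.succ_ne_zero _)]
      have hred : (m + 2 - 1) = m + 1 := by omega
      rw [hred, mul_one]
      show -μ * dxT μ τ (m+1) (t - τ) = _
      unfold dxT
      by_cases hcond : ((m+1 : ℕ) : ℝ) * τ ≤ t - τ
      · have hge : (0:ℝ) ≤ t - c := by
          rw [hc_def]; push_cast; push_cast at hcond; linarith
        rw [if_pos hcond, mul_one, max_eq_left hge]
        have harg : t - c = t - τ - ((m+1 : ℕ) : ℝ) * τ := by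
          rw [hc_def]; push_cast; ring
        have hfac : ((Nat.factorial (m+2) : ℕ) : ℝ)
            = ((m+2 : ℕ) : ℝ) * ((Nat.factorial (m+1) : ℕ) : ℝ) := by
          exact_mod_cast congrArg (Nat.cast (R := ℝ)) (Nat.factorial_succ (m+1))
        rw [← harg, hfac]
        have hf1 : (0:ℝ) < ((Nat.factorial (m+1) : ℕ) : ℝ) := by
          exact_mod_cast Nat.factorial_pos (m+1)
        have hf2 : (0:ℝ) < ((m+2 : ℕ) : ℝ) := by positivity
        field_simp
        ring
      · have hlt : t - c < 0 := by
          rw [hc_def]; push_cast; push_cast at hcond; linarith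
        rw [if_neg hcond, mul_zero, mul_zero, max_eq_right hlt.le]
        rw [zero_pow (by omega : m + 1 ≠ 0)]
        norm_num
  have hsum := HasDerivAt.fun_sum (u := Finset.range (M+1)) (fun n _ => hterm n)
  have hval : (∑ n ∈ Finset.range (M+1), if n = 0 then (0:ℝ) else -μ * dxT μ τ (n - 1) (t - τ))
      = -μ * ∑ m ∈ Finset.range M, dxT μ τ m (t - τ) := by
    rw [Finset.sum_range_succ']
    simp [Finset.mul_sum]
  rw [hval] at hsum
  unfold Qs
  exact hsum

lemma dexp_hasDerivAt {μ τ : ℝ} (hτ : 0 < τ) {t : ℝ} (ht : 0 < t) (hne : t ≠ τ) :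
    HasDerivAt (dexp μ τ) (-μ * dexp μ τ (t - τ)) t := by
  obtain ⟨M, hM⟩ := exists_nat_gt (t / τ)
  have htM : t < (M : ℝ) * τ := by rw [div_lt_iff₀ hτ] at hM; linarith
  have htM1 : t < ((M + 1 : ℕ) : ℝ) * τ := by push_cast; linarith
  have h1 := Qs_hasDerivAt (μ := μ) hτ M hne
  have h2 : dexp μ τ (t - τ) = ∑ m ∈ Finset.range M, dxT μ τ m (t - τ) :=
    dexp_eq_sum hτ.le (by linarith)
  rw [← h2] at h1
  apply h1.congr_of_eventuallyEq
  filter_upwards [Ioo_mem_nhds ht htM1] with u hu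
  exact dexp_eq_Qs hτ hu.1.le hu.2

lemma dexp_hasDerivWithinAt {μ τ : ℝ} (hτ : 0 < τ) {t : ℝ} (ht : 0 < t) :
    HasDerivWithinAt (dexp μ τ) (-μ * dexp μ τ (t - τ)) (Ioi t) t := by
  by_cases hne : t = τ
  · subst hne
    have hval : dexp μ t (t - t) = 1 := by
      rw [sub_self]; exact dexp_one hτ le_rfl hτ.le
    rw [hval, mul_one]
    have hp : HasDerivWithinAt (fun y : ℝ => 1 + -μ * (y - t)) (-μ) (Ioi t) t := by
      have h := (((hasDerivAt_id t).sub_const t).const_mul (-μ)).const_add 1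
      simpa using h.hasDerivWithinAt
    apply hp.congr_of_eventuallyEq
    · have hmem : Ioi t ∩ Iio (2 * t) ∈ nhdsWithin t (Ioi t) :=
        Filter.inter_mem self_mem_nhdsWithin
          (mem_nhdsWithin_of_mem_nhds (Iio_mem_nhds (by linarith)))
      filter_upwards [hmem] with u hu
      have hu1 : t < u := hu.1
      have h0u : (0:ℝ) ≤ u := by linarith
      have hu2 : u < ((2:ℕ) : ℝ) * t := by push_cast; exact hu.2
      rw [dexp_eq_Qs hτ h0u hu2]
      unfold Qs
      rw [Finset.sum_range_succ, Finset.sum_range_succ, Finset.sum_range_zero]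
      have hmax : max (u - (1:ℕ) * t) 0 = u - t := by
        have h1 : u - (1:ℕ) * t = u - t := by push_cast; ring
        rw [h1]
        exact max_eq_left (by linarith)
      rw [hmax]
      norm_num
    · rw [dexp_one hτ hτ.le le_rfl]
      norm_num
  · exact (dexp_hasDerivAt hτ ht hne).hasDerivWithinAt


lemma mono_of_deriv {f f' : ℝ → ℝ} {a b : ℝ} (hc : ContinuousOn f (Icc a b))
    (hd : ∀ x ∈ Ioo a b, HasDerivAt f (f' x) x) (h0 : ∀ x ∈ Ioo a b, 0 ≤ f' x) :
    MonotoneOn f (Icc a b) := by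
  apply monotoneOn_of_deriv_nonneg (convex_Icc a b) hc
  · intro x hx
    rw [interior_Icc] at hx
    exact (hd x hx).differentiableAt.differentiableWithinAt
  · intro x hx
    rw [interior_Icc] at hx
    rw [(hd x hx).deriv]
    exact h0 x hx

lemma anti_of_deriv {f f' : ℝ → ℝ} {a b : ℝ} (hc : ContinuousOn f (Icc a b))
    (hd : ∀ x ∈ Ioo a b, HasDerivAt f (f' x) x) (h0 : ∀ x ∈ Ioo a b, f' x ≤ 0) :
    AntitoneOn f (Icc a b) := by
  apply antitoneOn_of_deriv_nonpos (convex_Icc a b) hc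
  · intro x hx
    rw [interior_Icc] at hx
    exact (hd x hx).differentiableAt.differentiableWithinAt
  · intro x hx
    rw [interior_Icc] at hx
    rw [(hd x hx).deriv]
    exact h0 x hx

lemma glue_mono {f : ℝ → ℝ} {a b c : ℝ} (hab : a ≤ b) (hbc : b ≤ c)
    (h1 : MonotoneOn f (Icc a b)) (h2 : MonotoneOn f (Icc b c)) :
    MonotoneOn f (Icc a c) := by
  intro x hx y hy hxy
  rcases le_total y b with h | h
  · exact h1 ⟨hx.1, hxy.trans h⟩ ⟨hy.1, h⟩ hxy
  · rcases le_total x b with h' | h'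
    · calc f x ≤ f b := h1 ⟨hx.1, h'⟩ ⟨hab, le_rfl⟩ h'
        _ ≤ f y := h2 ⟨le_rfl, hbc⟩ ⟨h, hy.2⟩ h
    · exact h2 ⟨h', hx.2⟩ ⟨h'.trans hxy, hy.2⟩ hxy

lemma glue_anti {f : ℝ → ℝ} {a b c : ℝ} (hab : a ≤ b) (hbc : b ≤ c)
    (h1 : AntitoneOn f (Icc a b)) (h2 : AntitoneOn f (Icc b c)) :
    AntitoneOn f (Icc a c) := by
  intro x hx y hy hxy
  rcases le_total y b with h | h
  · exact h1 ⟨hx.1, hxy.trans h⟩ ⟨hy.1, h⟩ hxy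
  · rcases le_total x b with h' | h'
    · calc f y ≤ f b := h2 ⟨le_rfl, hbc⟩ ⟨h, hy.2⟩ h
        _ ≤ f x := h1 ⟨hx.1, h'⟩ ⟨hab, le_rfl⟩ h'
    · exact h2 ⟨h', hx.2⟩ ⟨h'.trans hxy, hy.2⟩ hxy

noncomputable def Rf (μ τ lam u : ℝ) : ℝ := Real.exp (lam * u) * dexp μ τ u

lemma Rf_continuousOn {μ τ : ℝ} (lam : ℝ) (hτ : 0 < τ) : ContinuousOn (Rf μ τ lam) (Ici 0) := by
  apply ContinuousOn.mul
  · exact (Real.continuous_exp.comp (continuous_const.mul continuous_id)).continuousOn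
  · exact dexp_continuousOn hτ

lemma Rf_hasDerivAt {μ τ : ℝ} (lam : ℝ) (hτ : 0 < τ) {u : ℝ} (hu : 0 < u) (hne : u ≠ τ) :
    HasDerivAt (Rf μ τ lam)
      (Real.exp (lam * u) * lam * dexp μ τ u + Real.exp (lam * u) * (-μ * dexp μ τ (u - τ))) u := by
  have h1 := dexp_hasDerivAt (μ := μ) hτ hu hne
  have h2 : HasDerivAt (fun y : ℝ => Real.exp (lam * y)) (Real.exp (lam * u) * lam) u := by
    simpa using ((hasDerivAt_id u).const_mul lam).exp
  exact h2.mul h1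

lemma exp_mul_exp_neg (x : ℝ) : Real.exp x * Real.exp (-x) = 1 := by
  rw [← Real.exp_add]; simp

lemma dexp_props {μ τ : ℝ} (hμ : 0 < μ) (hτ : 0 < τ) (hμτ : μ * τ < (Real.exp 1)⁻¹) :
    (∀ t : ℝ, 0 ≤ dexp μ τ t) ∧ (∀ x y : ℝ, 0 ≤ x → x ≤ y → dexp μ τ y ≤ dexp μ τ x)
      ∧ (∀ t : ℝ, 0 ≤ t → dexp μ τ t ≤ Real.exp (μ * τ) * Real.exp (-(μ * t))) := by
  -- existence of lam
  obtain ⟨lam, hlam_mem, hlam⟩ : ∃ l, l ∈ Icc (0:ℝ) (1/τ) ∧ l * Real.exp (-(l * τ)) = μ := by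
    have hcont : ContinuousOn (fun x : ℝ => x * Real.exp (-(x * τ))) (Icc 0 (1/τ)) := by
      apply Continuous.continuousOn
      exact continuous_id.mul (Real.continuous_exp.comp (continuous_id.mul continuous_const).neg)
    have hsub := intermediate_value_Icc (by positivity : (0:ℝ) ≤ 1/τ) hcont
    have hmem : μ ∈ Icc ((0:ℝ) * Real.exp (-((0:ℝ) * τ))) ((1/τ) * Real.exp (-((1/τ) * τ))) := by
      constructor
      · simp
        exact hμ.le
      · have hττ : (1/τ) * τ = 1 := by field_simp
        rw [hττ, Real.exp_neg]
        have h1 : (0:ℝ) < 1/τ := by positivity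
        have h2 : μ * τ * (1/τ) < (Real.exp 1)⁻¹ * (1/τ) := by
          exact mul_lt_mul_of_pos_right hμτ h1
        have h3 : μ * τ * (1/τ) = μ := by field_simp
        linarith
    obtain ⟨l, hl, he⟩ := hsub hmem
    exact ⟨l, hl, he⟩
  have hlam_pos : 0 < lam := by
    rcases hlam_mem.1.lt_or_eq with h | h
    · exact h
    · exfalso
      rw [← h, zero_mul] at hlam
      linarith
  -- key exponential identity
  have hkey : ∀ u : ℝ, μ * Real.exp (lam * u) * dexp μ τ (u - τ) = lam * Rf μ τ lam (u - τ) := by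
    intro u
    unfold Rf
    have h2 : Real.exp (-(lam * τ)) * Real.exp (lam * u) = Real.exp (lam * (u - τ)) := by
      rw [← Real.exp_add]; congr 1; ring
    calc μ * Real.exp (lam * u) * dexp μ τ (u - τ)
        = (lam * Real.exp (-(lam * τ))) * Real.exp (lam * u) * dexp μ τ (u - τ) := by rw [hlam]
      _ = lam * (Real.exp (-(lam * τ)) * Real.exp (lam * u)) * dexp μ τ (u - τ) := by ring
      _ = lam * (Real.exp (lam * (u - τ)) * dexp μ τ (u - τ)) := by rw [h2]; ring
  -- base monotone interval
  have base : MonotoneOn (Rf μ τ lam) (Icc 0 τ) := by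
    intro x hx y hy hxy
    unfold Rf
    rw [dexp_one hτ hx.1 hx.2, dexp_one hτ hy.1 hy.2, mul_one, mul_one]
    exact Real.exp_le_exp.2 (mul_le_mul_of_nonneg_left hxy hlam_pos.le)
  -- induction step
  have step : ∀ a : ℝ, τ ≤ a → MonotoneOn (Rf μ τ lam) (Icc 0 a) →
      MonotoneOn (Rf μ τ lam) (Icc 0 (a + τ)) := by
    intro a ha ih
    have ha0 : (0:ℝ) ≤ a := hτ.le.trans ha
    have hIccsub : Icc a (a + τ) ⊆ Ici (0:ℝ) := fun z hz => le_trans ha0 hz.1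
    -- the auxiliary function V
    set c := Rf μ τ lam a with hc
    have hVd : ∀ u ∈ Ioo a (a + τ), HasDerivAt (fun z => dexp μ τ z - c * Real.exp (-(lam * z)))
        (-μ * dexp μ τ (u - τ) - c * (Real.exp (-(lam * u)) * -lam)) u := by
      intro u hu
      have h1 := dexp_hasDerivAt (μ := μ) hτ (lt_of_lt_of_le hτ (ha.trans hu.1.le)) (by
        intro hE; rw [hE] at hu; exact absurd hu.1 (not_lt.2 ha))
      have h0 : HasDerivAt (fun y : ℝ => -(lam * y)) (-lam) u := by
        simpa using ((hasDerivAt_id u).const_mul lam).fun_neg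
      have h2 := h0.exp
      exact h1.sub (h2.const_mul c)
    have hVnonneg : ∀ u ∈ Ioo a (a + τ),
        0 ≤ -μ * dexp μ τ (u - τ) - c * (Real.exp (-(lam * u)) * -lam) := by
      intro u hu
      have hmem1 : u - τ ∈ Icc (0:ℝ) a := ⟨by linarith [hu.1], by linarith [hu.2]⟩
      have h8 : Rf μ τ lam (u - τ) ≤ c := ih hmem1 ⟨ha0, le_rfl⟩ hmem1.2
      have h5 : μ * dexp μ τ (u - τ) = lam * Rf μ τ lam (u - τ) * Real.exp (-(lam * u)) := by
        calc μ * dexp μ τ (u - τ)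
            = μ * dexp μ τ (u - τ) * (Real.exp (lam * u) * Real.exp (-(lam * u))) := by
              rw [exp_mul_exp_neg]; ring
          _ = (μ * Real.exp (lam * u) * dexp μ τ (u - τ)) * Real.exp (-(lam * u)) := by ring
          _ = lam * Rf μ τ lam (u - τ) * Real.exp (-(lam * u)) := by rw [hkey u]
      have h9 : (0:ℝ) < Real.exp (-(lam * u)) := Real.exp_pos _
      nlinarith [mul_nonneg (mul_nonneg hlam_pos.le h9.le) (sub_nonneg.2 h8)]
    have hVmono : MonotoneOn (fun z => dexp μ τ z - c * Real.exp (-(lam * z))) (Icc a (a + τ)) := by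
      have hcV : ContinuousOn (fun z => dexp μ τ z - c * Real.exp (-(lam * z))) (Icc a (a + τ)) := by
        have hc1 : ContinuousOn (dexp μ τ) (Icc a (a + τ)) := (dexp_continuousOn hτ).mono hIccsub
        have hc2 : Continuous (fun z : ℝ => c * Real.exp (-(lam * z))) :=
          continuous_const.mul (Real.continuous_exp.comp (continuous_const.mul continuous_id).neg)
        exact hc1.sub hc2.continuousOn
      exact mono_of_deriv
        (f' := fun u => -μ * dexp μ τ (u - τ) - c * (Real.exp (-(lam * u)) * -lam))
        hcV hVd hVnonneg
    have hA : ∀ u ∈ Icc a (a + τ), c ≤ Rf μ τ lam u := by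
      intro u hu
      have h0 := hVmono ⟨le_rfl, by linarith⟩ hu hu.1
      have hVa : dexp μ τ a - c * Real.exp (-(lam * a)) = 0 := by
        rw [hc]
        unfold Rf
        have h7 := exp_mul_exp_neg (lam * a)
        linear_combination (-(dexp μ τ a)) * h7
      have h1 : c * Real.exp (-(lam * u)) ≤ dexp μ τ u := by
        simp only at h0
        linarith
      unfold Rf
      calc c = c * (Real.exp (lam * u) * Real.exp (-(lam * u))) := by
            rw [exp_mul_exp_neg]; ring
        _ = Real.exp (lam * u) * (c * Real.exp (-(lam * u))) := by ring
        _ ≤ Real.exp (lam * u) * dexp μ τ u :=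
            mul_le_mul_of_nonneg_left h1 (Real.exp_pos _).le
    have hB : MonotoneOn (Rf μ τ lam) (Icc a (a + τ)) := by
      apply mono_of_deriv
        (f' := fun u => Real.exp (lam * u) * lam * dexp μ τ u
          + Real.exp (lam * u) * (-μ * dexp μ τ (u - τ)))
        ((Rf_continuousOn lam hτ).mono hIccsub)
        (fun u hu => Rf_hasDerivAt lam hτ (lt_of_lt_of_le hτ (ha.trans hu.1.le)) (by
          intro hE; rw [hE] at hu; exact absurd hu.1 (not_lt.2 ha)))
      intro u hu
      have hmem1 : u - τ ∈ Icc (0:ℝ) a := ⟨by linarith [hu.1], by linarith [hu.2]⟩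
      have h8 : Rf μ τ lam (u - τ) ≤ c := ih hmem1 ⟨ha0, le_rfl⟩ hmem1.2
      have h9 : c ≤ Rf μ τ lam u := hA u ⟨hu.1.le, hu.2.le⟩
      have h5 := hkey u
      have h6 : Real.exp (lam * u) * lam * dexp μ τ u = lam * Rf μ τ lam u := by
        unfold Rf; ring
      nlinarith [mul_le_mul_of_nonneg_left (h8.trans h9) hlam_pos.le]
    exact glue_mono ha0 (by linarith) ih hB
  have hall : ∀ n : ℕ, MonotoneOn (Rf μ τ lam) (Icc 0 (τ + n * τ)) := by
    intro n
    induction n with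
    | zero => simpa using base
    | succ k ihk =>
      have h3 : τ + ((k+1 : ℕ) : ℝ) * τ = (τ + (k : ℝ) * τ) + τ := by push_cast; ring
      rw [h3]
      apply step (τ + (k : ℝ) * τ) _ ihk
      nlinarith [show (0:ℝ) ≤ (k:ℝ) from Nat.cast_nonneg k, hτ]
  have hRmono : ∀ x y : ℝ, 0 ≤ x → x ≤ y → Rf μ τ lam x ≤ Rf μ τ lam y := by
    intro x y hx hxy
    obtain ⟨n, hn⟩ := exists_nat_ge (y / τ)
    have hy' : y ≤ τ + n * τ := by
      rw [div_le_iff₀ hτ] at hn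
      linarith
    exact hall n ⟨hx, by linarith⟩ ⟨hx.trans hxy, hy'⟩ hxy
  have hR0 : Rf μ τ lam 0 = 1 := by
    unfold Rf
    rw [mul_zero, Real.exp_zero, one_mul]
    exact dexp_one hτ le_rfl hτ.le
  have hFnonneg : ∀ t : ℝ, 0 ≤ dexp μ τ t := by
    intro t
    rcases lt_or_ge t 0 with h | h
    · rw [dexp_of_neg hτ.le h]
    · have h1 : (1:ℝ) ≤ Rf μ τ lam t := hR0 ▸ hRmono 0 t le_rfl h
      unfold Rf at h1
      nlinarith [Real.exp_pos (lam * t)]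
  -- antitonicity of dexp on [0, ∞)
  have baseA : AntitoneOn (dexp μ τ) (Icc 0 τ) := by
    intro x hx y hy hxy
    rw [dexp_one hτ hx.1 hx.2, dexp_one hτ hy.1 hy.2]
  have stepA : ∀ a : ℝ, τ ≤ a → AntitoneOn (dexp μ τ) (Icc 0 a) →
      AntitoneOn (dexp μ τ) (Icc 0 (a + τ)) := by
    intro a ha ih
    have ha0 : (0:ℝ) ≤ a := hτ.le.trans ha
    have hIccsub : Icc a (a + τ) ⊆ Ici (0:ℝ) := fun z hz => le_trans ha0 hz.1
    have hB : AntitoneOn (dexp μ τ) (Icc a (a + τ)) := by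
      apply anti_of_deriv
        (f' := fun u => -μ * dexp μ τ (u - τ))
        ((dexp_continuousOn hτ).mono hIccsub)
        (fun u hu => dexp_hasDerivAt hτ (lt_of_lt_of_le hτ (ha.trans hu.1.le)) (by
          intro hE; rw [hE] at hu; exact absurd hu.1 (not_lt.2 ha)))
      intro u _
      have := mul_nonneg hμ.le (hFnonneg (u - τ))
      linarith
    exact glue_anti ha0 (by linarith) ih hB
  have hallA : ∀ n : ℕ, AntitoneOn (dexp μ τ) (Icc 0 (τ + n * τ)) := by
    intro n
    induction n with
    | zero => simpa using baseA
    | succ k ihk =>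
      have h3 : τ + ((k+1 : ℕ) : ℝ) * τ = (τ + (k : ℝ) * τ) + τ := by push_cast; ring
      rw [h3]
      apply stepA (τ + (k : ℝ) * τ) _ ihk
      nlinarith [show (0:ℝ) ≤ (k:ℝ) from Nat.cast_nonneg k, hτ]
  have hFanti : ∀ x y : ℝ, 0 ≤ x → x ≤ y → dexp μ τ y ≤ dexp μ τ x := by
    intro x y hx hxy
    obtain ⟨n, hn⟩ := exists_nat_ge (y / τ)
    have hy' : y ≤ τ + n * τ := by
      rw [div_le_iff₀ hτ] at hn
      linarith
    exact hallA n ⟨hx, by linarith⟩ ⟨hx.trans hxy, hy'⟩ hxy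
  -- antitonicity of W = Rf μ τ μ on [τ, ∞)
  have baseW : AntitoneOn (Rf μ τ μ) (Icc τ τ) := by
    intro x hx y hy _
    have hx' : x = τ := le_antisymm hx.2 hx.1
    have hy' : y = τ := le_antisymm hy.2 hy.1
    rw [hx', hy']
  have stepW : ∀ a : ℝ, τ ≤ a → AntitoneOn (Rf μ τ μ) (Icc τ a) →
      AntitoneOn (Rf μ τ μ) (Icc τ (a + τ)) := by
    intro a ha ih
    have ha0 : (0:ℝ) ≤ a := hτ.le.trans ha
    have hIccsub : Icc a (a + τ) ⊆ Ici (0:ℝ) := fun z hz => le_trans ha0 hz.1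
    have hB : AntitoneOn (Rf μ τ μ) (Icc a (a + τ)) := by
      apply anti_of_deriv
        (f' := fun u => Real.exp (μ * u) * μ * dexp μ τ u
          + Real.exp (μ * u) * (-μ * dexp μ τ (u - τ)))
        ((Rf_continuousOn μ hτ).mono hIccsub)
        (fun u hu => Rf_hasDerivAt μ hτ (lt_of_lt_of_le hτ (ha.trans hu.1.le)) (by
          intro hE; rw [hE] at hu; exact absurd hu.1 (not_lt.2 ha)))
      intro u hu
      have h1 : dexp μ τ u ≤ dexp μ τ (u - τ) :=
        hFanti (u - τ) u (by linarith [hu.1]) (by linarith)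
      have h2 : (0:ℝ) ≤ μ * Real.exp (μ * u) * (dexp μ τ (u - τ) - dexp μ τ u) :=
        mul_nonneg (mul_nonneg hμ.le (Real.exp_pos _).le) (sub_nonneg.2 h1)
      nlinarith [h2]
    exact glue_anti ha (by linarith) ih hB
  have hallW : ∀ n : ℕ, AntitoneOn (Rf μ τ μ) (Icc τ (τ + n * τ)) := by
    intro n
    induction n with
    | zero => simpa using baseW
    | succ k ihk =>
      have h3 : τ + ((k+1 : ℕ) : ℝ) * τ = (τ + (k : ℝ) * τ) + τ := by push_cast; ring
      rw [h3]
      apply stepW (τ + (k : ℝ) * τ) _ ihk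
      nlinarith [show (0:ℝ) ≤ (k:ℝ) from Nat.cast_nonneg k, hτ]
  have hWanti : ∀ x y : ℝ, τ ≤ x → x ≤ y → Rf μ τ μ y ≤ Rf μ τ μ x := by
    intro x y hx hxy
    obtain ⟨n, hn⟩ := exists_nat_ge (y / τ)
    have hy' : y ≤ τ + n * τ := by
      rw [div_le_iff₀ hτ] at hn
      linarith
    exact hallW n ⟨hx, by linarith [hx.trans hxy]⟩ ⟨hx.trans hxy, hy'⟩ hxy
  -- the final bound
  refine ⟨hFnonneg, hFanti, ?_⟩
  intro t ht
  rcases le_total t τ with h | h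
  · rw [dexp_one hτ ht h, ← Real.exp_add]
    have h1 := Real.add_one_le_exp (μ * τ + -(μ * t))
    nlinarith [mul_nonneg hμ.le (sub_nonneg.2 h)]
  · have h1 : Rf μ τ μ t ≤ Rf μ τ μ τ := hWanti τ t le_rfl h
    have h2 : Rf μ τ μ τ = Real.exp (μ * τ) := by
      unfold Rf
      rw [dexp_one hτ hτ.le le_rfl, mul_one]
    have h3 : Real.exp (μ * t) * dexp μ τ t ≤ Real.exp (μ * τ) := by
      rw [← h2]; exact h1
    calc dexp μ τ t = (Real.exp (μ * t) * dexp μ τ t) * Real.exp (-(μ * t)) := by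
          have h7 := exp_mul_exp_neg (μ * t)
          linear_combination (dexp μ τ t) * h7.symm
      _ ≤ Real.exp (μ * τ) * Real.exp (-(μ * t)) :=
          mul_le_mul_of_nonneg_right h3 (Real.exp_pos _).le

end DexpAux

open DexpAux Filter Topology

/-- For `0 < μτ < 1/e`, the moment generating function of the delay exponential
distribution (with density `ψ(t) = μ dexp(-μ(t-τ); -μτ)` on `[0, ∞)`) equals
`1/(1 - μ⁻¹ s e^{-sτ})` for all `s` in a neighbourhood of `0`. -/
theorem dexp_mgf (μ τ : ℝ) (hμ : 0 < μ) (hτ : 0 < τ)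
    (hμτ : μ * τ < (Real.exp 1)⁻¹) :
    ∃ ε > (0 : ℝ), ∀ s : ℝ, |s| < ε →
      ∫ t in Ioi (0 : ℝ), Real.exp (s * t) * (μ * dexp μ τ (t - τ))
        = 1 / (1 - μ⁻¹ * s * Real.exp (-s * τ)) := by
  obtain ⟨hFnonneg, hFanti, hFbound⟩ := dexp_props hμ hτ hμτ
  refine ⟨μ / 2, by positivity, ?_⟩
  intro s hs
  obtain ⟨hs1, hs2⟩ := abs_lt.1 hs
  have hμs : 0 < μ - s := by linarith
  set C : ℝ := Real.exp (μ * τ) with hC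
  set h : ℝ → ℝ := fun u => Real.exp (s * u) * dexp μ τ u with hh
  set g : ℝ → ℝ := fun u => Real.exp (s * u) * (μ * dexp μ τ (u - τ)) with hg
  have hCpos : 0 < C := Real.exp_pos _
  -- pointwise bounds
  have hb_bound : ∀ b : ℝ, 0 ≤ b → ‖h b‖ ≤ C * Real.exp (-(μ - s) * b) := by
    intro b hb
    have h1 : ‖h b‖ = Real.exp (s * b) * dexp μ τ b := by
      rw [hh]
      simp only [Real.norm_eq_abs, abs_mul, abs_of_nonneg (Real.exp_pos _).le,
        abs_of_nonneg (hFnonneg b)]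
    rw [h1]
    have h2 : dexp μ τ b ≤ C * Real.exp (-(μ * b)) := hFbound b hb
    have h3 : Real.exp (s * b) * Real.exp (-(μ * b)) = Real.exp (-(μ - s) * b) := by
      rw [← Real.exp_add]; congr 1; ring
    calc Real.exp (s * b) * dexp μ τ b
        ≤ Real.exp (s * b) * (C * Real.exp (-(μ * b))) :=
          mul_le_mul_of_nonneg_left h2 (Real.exp_pos _).le
      _ = C * (Real.exp (s * b) * Real.exp (-(μ * b))) := by ring
      _ = C * Real.exp (-(μ - s) * b) := by rw [h3]
  have hg_bound : ∀ u : ℝ, τ ≤ u → ‖g u‖ ≤ (μ * C * C) * Real.exp (-(μ - s) * u) := by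
    intro u hu
    have h1 : ‖g u‖ = Real.exp (s * u) * (μ * dexp μ τ (u - τ)) := by
      rw [hg]
      simp only [Real.norm_eq_abs, abs_mul, abs_of_nonneg (Real.exp_pos _).le,
        abs_of_nonneg (hFnonneg (u - τ)), abs_of_nonneg hμ.le]
    rw [h1]
    have h2 : dexp μ τ (u - τ) ≤ C * Real.exp (-(μ * (u - τ))) := hFbound _ (by linarith)
    have h3 : Real.exp (s * u) * Real.exp (-(μ * (u - τ)))
        = Real.exp (μ * τ) * Real.exp (-(μ - s) * u) := by
      rw [← Real.exp_add, ← Real.exp_add]; congr 1; ring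
    calc Real.exp (s * u) * (μ * dexp μ τ (u - τ))
        ≤ Real.exp (s * u) * (μ * (C * Real.exp (-(μ * (u - τ))))) := by
          apply mul_le_mul_of_nonneg_left _ (Real.exp_pos _).le
          exact mul_le_mul_of_nonneg_left h2 hμ.le
      _ = (μ * C) * (Real.exp (s * u) * Real.exp (-(μ * (u - τ)))) := by ring
      _ = (μ * C) * (Real.exp (μ * τ) * Real.exp (-(μ - s) * u)) := by rw [h3]
      _ = (μ * C * C) * Real.exp (-(μ - s) * u) := by rw [hC]; ring
  -- integrability of h on (0, ∞)
  have hmeas_h : AEStronglyMeasurable h (volume.restrict (Ioi (0:ℝ))) := by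
    have hcont : ContinuousOn h (Ici 0) := by
      apply ContinuousOn.mul _ (dexp_continuousOn hτ)
      exact (Real.continuous_exp.comp (continuous_const.mul continuous_id)).continuousOn
    exact ((hcont.mono Ioi_subset_Ici_self).aemeasurable measurableSet_Ioi).aestronglyMeasurable
  have hInth : IntegrableOn h (Ioi (0:ℝ)) := by
    apply Integrable.mono' ((exp_neg_integrableOn_Ioi 0 hμs).const_mul C) hmeas_h
    filter_upwards [ae_restrict_mem measurableSet_Ioi] with u hu
    exact hb_bound u (le_of_lt hu)
  -- integrability of g on (0, ∞)
  have hIntg : IntegrableOn g (Ioi (0:ℝ)) := by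
    have hpart1 : IntegrableOn g (Ioo 0 τ) := by
      apply (integrableOn_zero (ε' := ℝ)).congr_fun _ measurableSet_Ioo
      intro u hu
      rw [hg]
      simp only
      rw [dexp_of_neg hτ.le (by linarith [hu.2] : u - τ < 0), mul_zero, mul_zero]
    have hpart2 : IntegrableOn g (Ici τ) := by
      have hmeas_g : AEStronglyMeasurable g (volume.restrict (Ici τ)) := by
        have hcont : ContinuousOn g (Ici τ) := by
          apply ContinuousOn.mul
          · exact (Real.continuous_exp.comp (continuous_const.mul continuous_id)).continuousOn
          · apply ContinuousOn.mul continuousOn_const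
            apply ContinuousOn.comp (dexp_continuousOn hτ)
              (continuous_id.sub continuous_const).continuousOn
            intro u hu
            simp only [mem_Ici] at hu ⊢
            exact sub_nonneg.2 hu
        exact (hcont.aemeasurable measurableSet_Ici).aestronglyMeasurable
      have hdom2 : IntegrableOn (fun u => (μ * C * C) * Real.exp (-(μ - s) * u)) (Ici τ) := by
        rw [integrableOn_Ici_iff_integrableOn_Ioi]
        exact (exp_neg_integrableOn_Ioi τ hμs).const_mul (μ * C * C)
      apply Integrable.mono' hdom2 hmeas_g
      filter_upwards [ae_restrict_mem measurableSet_Ici] with u hu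
      exact hg_bound u hu
    have := hpart1.union hpart2
    rwa [Ioo_union_Ici_eq_Ioi hτ] at this
  -- global integrability
  have hzero_g : ∀ u : ℝ, u ≤ 0 → g u = 0 := by
    intro u hu
    rw [hg]
    simp only
    rw [dexp_of_neg hτ.le (by linarith : u - τ < 0), mul_zero, mul_zero]
  have hzero_h : ∀ u : ℝ, u < 0 → h u = 0 := by
    intro u hu
    rw [hh]
    simp only
    rw [dexp_of_neg hτ.le hu, mul_zero]
  have hIntg_total : Integrable g := by
    rw [← integrableOn_univ, ← Iic_union_Ioi (a := (0:ℝ))]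
    apply IntegrableOn.union _ hIntg
    apply (integrableOn_zero (ε' := ℝ)).congr_fun _ measurableSet_Iic
    intro u hu
    exact (hzero_g u hu).symm
  have hInth_total : Integrable h := by
    rw [← integrableOn_univ, ← Iio_union_Ici (a := (0:ℝ))]
    apply IntegrableOn.union
    · apply (integrableOn_zero (ε' := ℝ)).congr_fun _ measurableSet_Iio
      intro u hu
      exact (hzero_h u hu).symm
    · rw [integrableOn_Ici_iff_integrableOn_Ioi]
      exact hInth
  set L : ℝ := ∫ u in Ioi (0:ℝ), h u with hL
  set I : ℝ := ∫ u in Ioi (0:ℝ), g u with hI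
  -- translation identity: I = μ e^{sτ} L
  have hshift : I = μ * Real.exp (s * τ) * L := by
    have h1 : ∫ u, g (u + τ) = ∫ u, g u := integral_add_right_eq_self g τ
    have h2 : ∀ u : ℝ, g (u + τ) = (μ * Real.exp (s * τ)) * h u := by
      intro u
      rw [hg, hh]
      simp only
      rw [show s * (u + τ) = s * u + s * τ by ring, Real.exp_add, add_sub_cancel_right]
      ring
    have h3 : ∫ u, g (u + τ) = (μ * Real.exp (s * τ)) * ∫ u, h u := by
      simp only [h2]
      exact integral_const_mul _ _
    have h4 : ∫ u, g u = I := by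
      rw [← intervalIntegral.integral_Iic_add_Ioi (b := (0:ℝ)) (hIntg_total.integrableOn) (hIntg_total.integrableOn)]
      have : ∫ u in Iic (0:ℝ), g u = 0 := by
        rw [setIntegral_congr_fun measurableSet_Iic (fun u hu => hzero_g u hu)]
        simp
      rw [this, zero_add]
    have h5 : ∫ u, h u = L := by
      rw [← intervalIntegral.integral_Iio_add_Ici (b := (0:ℝ)) (hInth_total.integrableOn) (hInth_total.integrableOn)]
      have h6 : ∫ u in Iio (0:ℝ), h u = 0 := by
        rw [setIntegral_congr_fun measurableSet_Iio (fun u hu => hzero_h u hu)]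
        simp
      rw [h6, zero_add, integral_Ici_eq_integral_Ioi]
    rw [h4, h3, h5] at h1
    linarith [h1]
  -- FTC
  have hFTC : ∀ b : ℝ, 0 < b → ∫ u in (0:ℝ)..b, (s * h u - g u) = h b - 1 := by
    intro b hb
    have h0 : h 0 = 1 := by
      rw [hh]
      simp only [mul_zero, Real.exp_zero, one_mul]
      exact dexp_one hτ le_rfl hτ.le
    rw [← h0]
    apply intervalIntegral.integral_eq_sub_of_hasDeriv_right_of_le hb.le
    · apply ContinuousOn.mono _ (Icc_subset_Ici_self : Icc (0:ℝ) b ⊆ Ici 0)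
      apply ContinuousOn.mul _ (dexp_continuousOn hτ)
      exact (Real.continuous_exp.comp (continuous_const.mul continuous_id)).continuousOn
    · intro x hx
      have hd := dexp_hasDerivWithinAt (μ := μ) hτ hx.1
      have he : HasDerivAt (fun y : ℝ => Real.exp (s * y)) (Real.exp (s * x) * s) x := by
        simpa using ((hasDerivAt_id x).const_mul s).exp
      have hprod := he.hasDerivWithinAt.mul hd
      refine hprod.congr_deriv (Eq.symm ?_)
      rw [hh, hg]
      simp only
      ring
    · apply (intervalIntegrable_iff_integrableOn_Ioc_of_le hb.le).2
      apply IntegrableOn.mono_set _ (Ioc_subset_Ioi_self)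
      exact (hInth.const_mul s).sub hIntg
  -- limits
  have hlimh : Tendsto h atTop (𝓝 0) := by
    apply squeeze_zero_norm' (a := fun b => C * Real.exp (-(μ - s) * b))
    · filter_upwards [eventually_ge_atTop (0:ℝ)] with b hb
      exact hb_bound b hb
    · have h1 : Tendsto (fun b : ℝ => -(μ - s) * b) atTop atBot := by
        exact (tendsto_const_mul_atBot_of_neg (by linarith : -(μ - s) < 0)).2 tendsto_id
      have h2 := Real.tendsto_exp_atBot.comp h1
      have := h2.const_mul C
      simpa using this
  have hlim2 : Tendsto (fun b => h b - 1) atTop (𝓝 (0 - 1)) := hlimh.sub_const 1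
  have hIoiLim : Tendsto (fun b => ∫ u in (0:ℝ)..b, (s * h u - g u)) atTop
      (𝓝 (∫ u in Ioi (0:ℝ), (s * h u - g u))) := by
    apply intervalIntegral_tendsto_integral_Ioi 0 _ tendsto_id
    exact (hInth.const_mul s).sub hIntg
  have hlim3 : Tendsto (fun b => ∫ u in (0:ℝ)..b, (s * h u - g u)) atTop (𝓝 (0 - 1)) := by
    apply hlim2.congr'
    filter_upwards [eventually_gt_atTop (0:ℝ)] with b hb
    exact (hFTC b hb).symm
  have hkeyeq : ∫ u in Ioi (0:ℝ), (s * h u - g u) = -1 := by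
    have := tendsto_nhds_unique hIoiLim hlim3
    linarith [this]
  have hsplit : ∫ u in Ioi (0:ℝ), (s * h u - g u) = s * L - I := by
    rw [integral_sub (hInth.const_mul s) hIntg, integral_const_mul]
  have hE : s * L - I = -1 := by rw [← hsplit]; exact hkeyeq
  -- final algebra
  have hEpos : 0 < Real.exp (s * τ) := Real.exp_pos _
  have hD : 0 < μ * Real.exp (s * τ) - s := by
    have h1 := Real.add_one_le_exp (s * τ)
    have h2 : μ * (s * τ + 1) ≤ μ * Real.exp (s * τ) := mul_le_mul_of_nonneg_left h1 hμ.le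
    have h3 : μ * τ < 1 := by
      have he1 : (1:ℝ) + 1 ≤ Real.exp 1 := by linarith [Real.add_one_le_exp 1]
      have he2 : (Real.exp 1)⁻¹ ≤ 1 := by
        rw [inv_eq_one_div, div_le_one (by linarith)]
        linarith
      linarith
    rcases le_or_gt 0 s with hss | hss
    · have h4 : s * (1 - μ * τ) ≤ s * 1 :=
        mul_le_mul_of_nonneg_left (by nlinarith : 1 - μ * τ ≤ 1) hss
      nlinarith
    · have h4 : 0 < s * (μ * τ - 1) := mul_pos_of_neg_of_neg hss (by linarith)
      nlinarith
  have hL1 : L * (μ * Real.exp (s * τ) - s) = 1 := by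
    rw [hshift] at hE
    linear_combination -hE
  have hIval : I * (μ * Real.exp (s * τ) - s) = μ * Real.exp (s * τ) := by
    rw [hshift]
    linear_combination (μ * Real.exp (s * τ)) * hL1
  have hden : 1 - μ⁻¹ * s * Real.exp (-s * τ) =
      (μ * Real.exp (s * τ) - s) / (μ * Real.exp (s * τ)) := by
    rw [show (-s * τ : ℝ) = -(s * τ) by ring, Real.exp_neg]
    field_simp
  show I = 1 / (1 - μ⁻¹ * s * Real.exp (-s * τ))
  rw [hden, one_div_div, eq_div_iff (ne_of_gt hD)]
  exact hIval
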